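/- Let Set* denote the category obtained from Set by freely adjoining a terminal object ⋆ (so Hom(X, ⋆) is a singleton for every set X, Hom(⋆, X) is empty for every set X, and Hom(⋆, ⋆) contains only the identity). Then Set* has finite limits, but no object of Set* is a strong generator: for every object G there is a non-invertible morphism m such that for every h : G → cod(m) there is a unique g : G → dom(m) with m ∘ g = h. Consequently Set* is not equivalent to any variety, although it has finite limits, effective congruences, and 1 is an abstractly finite, regularly projective generator. -/

import Mathlib

open CategoryTheory

universe v u

namespace Paper

variable {K : Type u} [Category.{v} K]

/-- `C` together with the injections `ι` is a coproduct of the family `Y`. -/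
def IsCoproductOf {M : Type v} (Y : M → K) (C : K) (ι : ∀ m, Y m ⟶ C) : Prop :=
  ∀ (Z : K) (g : ∀ m, Y m ⟶ Z), ∃! d : C ⟶ Z, ∀ m, ι m ≫ d = g m

/-- `G` has copowers: all set-indexed coproducts of copies of `G` exist. -/
def HasCopowers (G : K) : Prop :=
  ∀ M : Type v, ∃ (C : K) (ι : M → (G ⟶ C)), IsCoproductOf (fun _ : M => G) C ι

/-- `e` is a coequalizer of the pair `r0, r1`. -/
def IsCoequalizerOf {R A B : K} (r0 r1 : R ⟶ A) (e : A ⟶ B) : Prop :=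
  r0 ≫ e = r1 ≫ e ∧
    ∀ (Z : K) (f : A ⟶ Z), r0 ≫ f = r1 ≫ f → ∃! g : B ⟶ Z, e ≫ g = f

/-- `e` is a regular epimorphism: a coequalizer of some parallel pair. -/
def IsRegEpi {A B : K} (e : A ⟶ B) : Prop :=
  ∃ (R : K) (r0 r1 : R ⟶ A), IsCoequalizerOf r0 r1 e

/-- `r0, r1` is a kernel pair of `f`. -/
def IsKernelPairOf {R A B : K} (r0 r1 : R ⟶ A) (f : A ⟶ B) : Prop :=
  r0 ≫ f = r1 ≫ f ∧
    ∀ (S : K) (s0 s1 : S ⟶ A), s0 ≫ f = s1 ≫ f →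
      ∃! t : S ⟶ R, t ≫ r0 = s0 ∧ t ≫ r1 = s1

def HasKernelPairs (K : Type u) [Category.{v} K] : Prop :=
  ∀ (A B : K) (f : A ⟶ B), ∃ (R : K) (r0 r1 : R ⟶ A), IsKernelPairOf r0 r1 f

def HasCoequalizersOfKernelPairs (K : Type u) [Category.{v} K] : Prop :=
  ∀ (R A B : K) (f : A ⟶ B) (r0 r1 : R ⟶ A), IsKernelPairOf r0 r1 f →
    ∃ (C : K) (e : A ⟶ C), IsCoequalizerOf r0 r1 e

/-- `e` is a strong (extremal) epimorphism. -/
def IsExtremalEpi {A B : K} (e : A ⟶ B) : Prop :=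
  Epi e ∧ ∀ (C : K) (g : A ⟶ C) (m : C ⟶ B), Mono m → g ≫ m = e → IsIso m

/-- `G` is a generator: every canonical morphism `[h] : ∐_{h : G ⟶ X} G ⟶ X` is epic. -/
def GeneratorP (G : K) : Prop :=
  ∀ (X C : K) (ι : (G ⟶ X) → (G ⟶ C)), IsCoproductOf (fun _ : (G ⟶ X) => G) C ι →
    ∀ d : C ⟶ X, (∀ h, ι h ≫ d = h) → Epi d

/-- `G` is a strong generator: every canonical morphism is a strong (extremal) epimorphism. -/
def StrongGenerator (G : K) : Prop :=
  ∀ (X C : K) (ι : (G ⟶ X) → (G ⟶ C)), IsCoproductOf (fun _ : (G ⟶ X) => G) C ι →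
    ∀ d : C ⟶ X, (∀ h, ι h ≫ d = h) → IsExtremalEpi d

/-- `G` is a regular generator: every canonical morphism is a regular epimorphism. -/
def RegularGenerator (G : K) : Prop :=
  ∀ (X C : K) (ι : (G ⟶ X) → (G ⟶ C)), IsCoproductOf (fun _ : (G ⟶ X) => G) C ι →
    ∀ d : C ⟶ X, (∀ h, ι h ≫ d = h) → IsRegEpi d

/-- `G` is a regular projective: morphisms from `G` factor through regular epimorphisms. -/
def RegularProjective (G : K) : Prop :=
  ∀ (A B : K) (e : A ⟶ B), IsRegEpi e → ∀ g : G ⟶ B, ∃ f : G ⟶ A, f ≫ e = g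

/-- `G` is abstractly finite: every morphism from `G` into a copower `M·G` factors
through the subcopower induced by a finite subset `M₀ ⊆ M`. -/
def AbstractlyFinite (G : K) : Prop :=
  ∀ (M : Type v) (C : K) (ι : M → (G ⟶ C)), IsCoproductOf (fun _ : M => G) C ι →
    ∀ f : G ⟶ C, ∃ M₀ : Set M, M₀.Finite ∧
      ∀ (C₀ : K) (ι₀ : M₀ → (G ⟶ C₀)) (u : C₀ ⟶ C),
        IsCoproductOf (fun _ : M₀ => G) C₀ ι₀ → (∀ m : M₀, ι₀ m ≫ u = ι m.1) →
          ∃ g : G ⟶ C₀, g ≫ u = f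

/-- `G` is finitely generated: its hom-functor `K(G,−) : K ⥤ Set` preserves colimits of
directed diagrams all of whose connecting morphisms are monomorphisms. -/
def FinitelyGenerated (G : K) : Prop :=
  ∀ (J : Type v) [Preorder J], IsDirected J (· ≤ ·) → Nonempty J →
    ∀ (D : J ⥤ K), (∀ (i j : J) (f : i ⟶ j), Mono (D.map f)) →
      ∀ (c : Limits.Cocone D), Nonempty (Limits.IsColimit c) →
        Nonempty (Limits.IsColimit ((coyoneda.obj (Opposite.op G)).mapCocone c))

/-- The pair `s0, s1` factorizes through the relation `r0, r1`. -/
def Factors {R A S : K} (r0 r1 : R ⟶ A) (s0 s1 : S ⟶ A) : Prop :=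
  ∃ t : S ⟶ R, t ≫ r0 = s0 ∧ t ≫ r1 = s1

def CollectivelyMonic {R A : K} (r0 r1 : R ⟶ A) : Prop :=
  ∀ (S : K) (f g : S ⟶ R), f ≫ r0 = g ≫ r0 → f ≫ r1 = g ≫ r1 → f = g

/-- A congruence: a collectively monic pair which is reflexive, symmetric and transitive. -/
def IsCongruence {R A : K} (r0 r1 : R ⟶ A) : Prop :=
  CollectivelyMonic r0 r1 ∧
  (∀ (S : K) (s : S ⟶ A), Factors r0 r1 s s) ∧
  (∀ (S : K) (s s' : S ⟶ A), Factors r0 r1 s s' → Factors r0 r1 s' s) ∧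
  (∀ (S : K) (s s' s'' : S ⟶ A),
    Factors r0 r1 s s' → Factors r0 r1 s' s'' → Factors r0 r1 s s'')

def HasCoequalizersOfCongruences (K : Type u) [Category.{v} K] : Prop :=
  ∀ (R A : K) (r0 r1 : R ⟶ A), IsCongruence r0 r1 →
    ∃ (C : K) (e : A ⟶ C), IsCoequalizerOf r0 r1 e

/-- `K` has effective congruences: every congruence is a kernel pair. -/
def EffectiveCongruences (K : Type u) [Category.{v} K] : Prop :=
  ∀ (R A : K) (r0 r1 : R ⟶ A), IsCongruence r0 r1 →
    ∃ (B : K) (f : A ⟶ B), IsKernelPairOf r0 r1 f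

/-- A coequalizer diagram in `Set`. -/
def IsCoequalizerOfTypes {R A C : Type v} (u v : R → A) (q : A → C) : Prop :=
  q ∘ u = q ∘ v ∧
    ∀ {Z : Type v} (h : A → Z), h ∘ u = h ∘ v → ∃! k : C → Z, k ∘ q = h

/-- `G` is effective: its hom-functor sends coequalizers of congruences to
coequalizers in `Set`. -/
def EffectiveObject (G : K) : Prop :=
  ∀ (R A : K) (r0 r1 : R ⟶ A), IsCongruence r0 r1 →
    ∀ (C : K) (e : A ⟶ C), IsCoequalizerOf r0 r1 e →
      IsCoequalizerOfTypes (fun f : G ⟶ R => f ≫ r0) (fun f : G ⟶ R => f ≫ r1)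
        (fun g : G ⟶ A => g ≫ e)

/-- The square with projections `f', e'` is a pullback of `e` along `f`. -/
def IsPullbackOf {P A B Q : K} (f' : P ⟶ A) (e' : P ⟶ B) (e : A ⟶ Q) (f : B ⟶ Q) : Prop :=
  f' ≫ e = e' ≫ f ∧
    ∀ (S : K) (a : S ⟶ A) (b : S ⟶ B), a ≫ e = b ≫ f →
      ∃! t : S ⟶ P, t ≫ f' = a ∧ t ≫ e' = b

/-- A varietal generator: a strong generator with copowers which is abstractly finite
and regularly projective. -/
def VarietalGenerator (G : K) : Prop :=
  HasCopowers G ∧ StrongGenerator G ∧ AbstractlyFinite G ∧ RegularProjective G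

/-- Barr-exactness: kernel pairs and their coequalizers exist, congruences are effective,
and regular epimorphisms are stable under pullback. -/
def BarrExact (K : Type u) [Category.{v} K] : Prop :=
  HasKernelPairs K ∧ HasCoequalizersOfKernelPairs K ∧ EffectiveCongruences K ∧
    ∀ (P A B Q : K) (f' : P ⟶ A) (e' : P ⟶ B) (e : A ⟶ Q) (f : B ⟶ Q),
      IsPullbackOf f' e' e f → IsRegEpi e → IsRegEpi e'


section Aux
open WithTerminal

/-! ### The underlying-set functor `Lam`, sending `⋆` to `PUnit`. -/

/-- Underlying-set functor, sending `⋆` to `PUnit`. -/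
def Lam : WithTerminal (Type v) ⥤ Type v :=
  WithTerminal.lift (𝟭 (Type v)) (fun _ => TypeCat.ofHom fun _ => PUnit.unit) (fun _ _ _ => rfl)

lemma hom_ext' : ∀ {P Y : WithTerminal (Type v)} (f g : P ⟶ Y),
    ⇑(ConcreteCategory.hom (Lam.map f)) = ⇑(ConcreteCategory.hom (Lam.map g)) → f = g := by
  intro P Y f g h
  match P, Y with
  | of W, of X => exact TypeCat.homEquiv.injective h
  | of W, WithTerminal.star => exact Subsingleton.elim f g
  | WithTerminal.star, WithTerminal.star => exact Subsingleton.elim f g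
  | WithTerminal.star, of X => exact f.elim

lemma lam_comp {P Q R : WithTerminal (Type v)} (f : P ⟶ Q) (g : Q ⟶ R) :
    ⇑(ConcreteCategory.hom (Lam.map (f ≫ g))) = fun p => Lam.map g (Lam.map f p) := by
  rw [Lam.map_comp]; rfl

/-- Build a morphism out of a set from a function to the underlying set. -/
def toOf {W : Type v} : ∀ (Y : WithTerminal (Type v)), (W → Lam.obj Y) → (of W ⟶ Y)
  | of _, t => TypeCat.ofHom t
  | WithTerminal.star, _ => PUnit.unit

lemma lam_toOf {W : Type v} : ∀ (Y : WithTerminal (Type v)) (t : W → Lam.obj Y),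
    ⇑(ConcreteCategory.hom (Lam.map (toOf Y t))) = t
  | of _, _ => rfl
  | WithTerminal.star, _ => funext fun _ => rfl

/-- Build a morphism into a set, given a witness forbidding the domain to be `⋆`. -/
def liftOf {X₀ S : Type v} : ∀ {P : WithTerminal (Type v)}
    (_ : P ⟶ of X₀) (_ : Lam.obj P → S), P ⟶ of S
  | of _, _, t => TypeCat.ofHom t
  | WithTerminal.star, k, _ => k.elim

lemma lam_liftOf {X₀ S : Type v} : ∀ {P : WithTerminal (Type v)}
    (k : P ⟶ of X₀) (t : Lam.obj P → S), ⇑(ConcreteCategory.hom (Lam.map (liftOf k t))) = t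
  | of _, _, _ => rfl
  | WithTerminal.star, k, _ => k.elim

lemma hom_to_star_ext {P Y : WithTerminal (Type v)} (hY : Y = WithTerminal.star)
    (f g : P ⟶ Y) : f = g := by subst hY; exact Subsingleton.elim f g

/-! ### Limits in `WithTerminal (Type v)` -/

variable {J : Type} [SmallCategory J]

/-- The sections set of the underlying diagram. -/
def Sec (F : J ⥤ WithTerminal (Type v)) : Type v :=
  {s : ∀ j, Lam.obj (F.obj j) // ∀ {i j : J} (f : i ⟶ j), Lam.map (F.map f) (s i) = s j}

variable {F : J ⥤ WithTerminal (Type v)}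

/-- The limit cone, when some vertex of the diagram is a genuine set. -/
def limCone {j₀ : J} {X₀ : Type v} (h₀ : F.obj j₀ = of X₀) : Limits.Cone F where
  pt := of (Sec F)
  π :=
    { app := fun j => toOf (F.obj j) (fun s => s.1 j)
      naturality := fun i j f => by
        apply hom_ext'
        rw [lam_comp, lam_comp, lam_toOf, lam_toOf]
        funext s
        show (Lam.map (((Functor.const J).obj (of (Sec F))).map f) s).1 j
          = Lam.map (F.map f) (s.1 i)
        rw [Functor.const_obj_map,
          show Lam.map (𝟙 (of (Sec F))) s = s from ConcreteCategory.congr_hom (Lam.map_id _) s]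
        exact (s.2 f).symm }

def limIsLimit {j₀ : J} {X₀ : Type v} (h₀ : F.obj j₀ = of X₀) :
    Limits.IsLimit (limCone (F := F) h₀) where
  lift c := liftOf (c.π.app j₀ ≫ eqToHom h₀)
    (fun p => ⟨fun j => Lam.map (c.π.app j) p, by
      intro i j f
      have := ConcreteCategory.congr_hom (congrArg Lam.map (c.w f)).symm p
      rw [lam_comp] at this
      exact this.symm⟩)
  fac c j := by
    apply hom_ext'
    erw [lam_comp]
    funext p
    exact (congrFun (lam_toOf (F.obj j) (fun s : Sec F => s.1 j)) _).trans
      (congrArg (fun s : Sec F => s.1 j) (congrFun (lam_liftOf _ _) p))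
  uniq c m hm := by
    apply hom_ext'
    erw [lam_liftOf]
    funext p
    apply Subtype.ext
    funext j
    have := ConcreteCategory.congr_hom (congrArg Lam.map (hm j)) p
    rw [lam_comp,
      show ⇑(ConcreteCategory.hom (Lam.map ((limCone (F := F) h₀).π.app j))) = fun s => s.1 j from lam_toOf _ _] at this
    exact this

def limConeStar (hall : ∀ j, F.obj j = WithTerminal.star) : Limits.Cone F where
  pt := WithTerminal.star
  π :=
    { app := fun j => eqToHom (hall j).symm
      naturality := fun i j f => hom_to_star_ext (hall j) _ _ }

def limIsLimitStar (hall : ∀ j, F.obj j = WithTerminal.star) :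
    Limits.IsLimit (limConeStar hall) where
  lift c := starTerminal.from c.pt
  fac c j := hom_to_star_ext (hall j) _ _
  uniq c m hm := hom_to_star_ext rfl _ _

instance wtShape : Limits.HasLimitsOfShape J (WithTerminal (Type v)) := by
  constructor
  intro F
  by_cases hall : ∀ j, F.obj j = WithTerminal.star
  · exact Limits.HasLimit.mk ⟨limConeStar hall, limIsLimitStar hall⟩
  · push_neg at hall
    obtain ⟨j₀, h₀⟩ := hall
    match hx : F.obj j₀ with
    | of X₀ => exact Limits.HasLimit.mk ⟨limCone hx, limIsLimit hx⟩
    | WithTerminal.star => exact absurd hx h₀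

instance : Limits.HasFiniteLimits (WithTerminal (Type v)) :=
  ⟨fun _ _ _ => wtShape⟩

/-! ### No strong generator -/

lemma part2 (G : WithTerminal (Type v)) :
    ∃ (A B : WithTerminal (Type v)) (m : A ⟶ B),
      ¬ IsIso m ∧ ∀ h : G ⟶ B, ∃! g : G ⟶ A, g ≫ m = h := by
  match G with
  | of X =>
    refine ⟨of (PUnit : Type v), WithTerminal.star, starTerminal.from _, ?_, ?_⟩
    · intro h
      exact ((@CategoryTheory.inv _ _ _ _ _ h :
        (WithTerminal.star : WithTerminal (Type v)) ⟶ of (PUnit : Type v))).elim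
    · intro h
      refine ⟨toOf (of (PUnit : Type v)) (fun _ => PUnit.unit), Subsingleton.elim _ _, ?_⟩
      intro g' _
      apply hom_ext'
      funext x
      rfl
  | WithTerminal.star =>
    refine ⟨of (PEmpty : Type v), of (PUnit : Type v),
      toOf (of (PUnit : Type v)) (fun e => e.elim), ?_, ?_⟩
    · intro h
      exact (WithTerminal.down (@CategoryTheory.inv _ _ _ _ _ h :
        of (PUnit : Type v) ⟶ of (PEmpty : Type v)) PUnit.unit).elim
    · intro h
      exact h.elim

end Aux


section Aux2
open WithTerminal

/-! ### Effective congruences -/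

lemma part4 : EffectiveCongruences (WithTerminal (Type v)) := by
  rintro R A r0 r1 ⟨hmono, hrefl, hsymm, htrans⟩
  match A, R with
  | WithTerminal.star, of Y =>
    obtain ⟨t, -, -⟩ := hrefl WithTerminal.star (𝟙 _)
    exact t.elim
  | WithTerminal.star, WithTerminal.star =>
    refine ⟨WithTerminal.star, 𝟙 _, Subsingleton.elim _ _, ?_⟩
    intro S s0 s1 _
    exact ⟨s0, ⟨Subsingleton.elim _ _, Subsingleton.elim _ _⟩,
      fun _ _ => Subsingleton.elim _ _⟩
  | of X, WithTerminal.star => exact r0.elim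
  | of X, of Y =>
    set rel : X → X → Prop :=
      fun a b => ∃ y : Y, Lam.map r0 y = a ∧ Lam.map r1 y = b with hrel
    have hrefl' : ∀ a, rel a a := by
      intro a
      obtain ⟨t, ht0, ht1⟩ := hrefl (of X) (𝟙 _)
      refine ⟨Lam.map t a, ?_, ?_⟩
      · have := ConcreteCategory.congr_hom (congrArg Lam.map ht0) a
        rw [lam_comp] at this
        exact this.trans
          (show Lam.map (𝟙 (of X)) a = a from ConcreteCategory.congr_hom (Lam.map_id (of X)) a)
      · have := ConcreteCategory.congr_hom (congrArg Lam.map ht1) a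
        rw [lam_comp] at this
        exact this.trans
          (show Lam.map (𝟙 (of X)) a = a from ConcreteCategory.congr_hom (Lam.map_id (of X)) a)
    have hfac : ∀ a b : X, rel a b →
        Factors r0 r1 (toOf (of X) (fun _ : (PUnit : Type v) => a))
          (toOf (of X) (fun _ : (PUnit : Type v) => b)) := by
      rintro a b ⟨y, h0, h1⟩
      refine ⟨toOf (of Y) (fun _ => y), ?_, ?_⟩
      · apply hom_ext'
        erw [lam_comp, lam_toOf]
        funext u
        exact h0
      · apply hom_ext'
        erw [lam_comp, lam_toOf]
        funext u
        exact h1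
    have hofac : ∀ a b : X,
        Factors r0 r1 (toOf (of X) (fun _ : (PUnit : Type v) => a))
          (toOf (of X) (fun _ : (PUnit : Type v) => b)) → rel a b := by
      rintro a b ⟨t, h0, h1⟩
      refine ⟨Lam.map t PUnit.unit, ?_, ?_⟩
      · have := ConcreteCategory.congr_hom (congrArg Lam.map h0) PUnit.unit
        rw [lam_comp] at this
        exact this
      · have := ConcreteCategory.congr_hom (congrArg Lam.map h1) PUnit.unit
        rw [lam_comp] at this
        exact this
    have hsymm' : ∀ a b, rel a b → rel b a := fun a b hab =>
      hofac b a (hsymm _ _ _ (hfac a b hab))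
    have htrans' : ∀ a b c, rel a b → rel b c → rel a c := fun a b c hab hbc =>
      hofac a c (htrans _ _ _ _ (hfac a b hab) (hfac b c hbc))
    let sd : Setoid X := ⟨rel, ⟨hrefl', fun {a b} h => hsymm' a b h,
      fun {a b c} h h' => htrans' a b c h h'⟩⟩
    have fquot0 : ∀ (a b : X), Quotient.mk sd a = Quotient.mk sd b → rel a b :=
      fun a b h => Quotient.exact h
    refine ⟨of (Quotient sd), toOf (of (Quotient sd)) (fun a => Quotient.mk sd a), ?_, ?_⟩
    · apply hom_ext'
      erw [lam_comp, lam_comp, lam_toOf]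
      funext y
      exact Quotient.sound ⟨y, rfl, rfl⟩
    · intro S s0 s1 hs
      match S with
      | WithTerminal.star => exact s0.elim
      | of W =>
        have hrelw : ∀ w : W, rel (Lam.map s0 w) (Lam.map s1 w) := by
          intro w
          have := ConcreteCategory.congr_hom (congrArg Lam.map hs) w
          rw [lam_comp, lam_comp] at this
          exact fquot0 _ _ this
        choose tfun ht0 ht1 using hrelw
        have fac0 : toOf (of Y) tfun ≫ r0 = s0 := by
          apply hom_ext'
          erw [lam_comp, lam_toOf]
          funext w
          exact ht0 w
        have fac1 : toOf (of Y) tfun ≫ r1 = s1 := by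
          apply hom_ext'
          erw [lam_comp, lam_toOf]
          funext w
          exact ht1 w
        refine ⟨toOf (of Y) tfun, ⟨fac0, fac1⟩, ?_⟩
        rintro t' ⟨h0', h1'⟩
        exact hmono (of W) t' _ (h0'.trans fac0.symm) (h1'.trans fac1.symm)

/-! ### `1` is abstractly finite -/

lemma part5 : AbstractlyFinite (WithTerminal.of (PUnit : Type v)) := by
  intro M C ι hC f
  set ι' : M → (of (PUnit : Type v) ⟶ of M) :=
    fun m => toOf (of M) (fun _ => m) with hι'
  have hC' : IsCoproductOf (fun _ : M => of (PUnit : Type v)) (of M) ι' := by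
    intro Z g
    match Z with
    | WithTerminal.star =>
      exact ⟨starTerminal.from _, fun m => Subsingleton.elim _ _,
        fun _ _ => Subsingleton.elim _ _⟩
    | of X =>
      refine ⟨toOf (of X) (fun m => Lam.map (g m) PUnit.unit), fun m => ?_, ?_⟩
      · apply hom_ext'
        rw [lam_comp]
        funext u
        cases u
        rfl
      · intro d' hd'
        apply hom_ext'
        funext m
        have := ConcreteCategory.congr_hom (congrArg Lam.map (hd' m)) PUnit.unit
        rw [lam_comp] at this
        exact this
  obtain ⟨vv, hv, -⟩ := hC (of M) ι'
  obtain ⟨uu, hu, -⟩ := hC' C ι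
  obtain ⟨d₁, hd₁, hdu⟩ := hC C ι
  have hvu : vv ≫ uu = 𝟙 C := by
    have h1 := hdu (vv ≫ uu) (fun m => by rw [← Category.assoc, hv m, hu m])
    have h2 := hdu (𝟙 C) (fun m => Category.comp_id _)
    rw [h1, h2]
  set m₀ : M := Lam.map (f ≫ vv) PUnit.unit with hm₀
  have hf : f = ι m₀ := by
    have hfv : f ≫ vv = ι' m₀ := by
      apply hom_ext'
      rw [show ⇑(ConcreteCategory.hom (Lam.map (ι' m₀))) = fun _ => m₀ from lam_toOf _ _]
      funext u
      cases u
      rfl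
    calc f = f ≫ 𝟙 C := (Category.comp_id f).symm
    _ = (f ≫ vv) ≫ uu := by rw [← hvu, Category.assoc]
    _ = ι' m₀ ≫ uu := by rw [hfv]
    _ = ι m₀ := hu m₀
  refine ⟨{m₀}, Set.finite_singleton m₀, ?_⟩
  intro C₀ ι₀ u₀ hC₀ hcomm
  exact ⟨ι₀ ⟨m₀, rfl⟩, by rw [hcomm ⟨m₀, rfl⟩, ← hf]⟩

/-! ### `1` is regularly projective -/

lemma part6 : RegularProjective (WithTerminal.of (PUnit : Type v)) := by
  rintro A B e ⟨R, r0, r1, heq, huniv⟩ g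
  match A, B with
  | WithTerminal.star, WithTerminal.star =>
    exact ⟨starTerminal.from _, Subsingleton.elim _ _⟩
  | of X, WithTerminal.star =>
    exfalso
    set f : of X ⟶ of (PUnit : Type v) := toOf _ (fun _ => PUnit.unit) with hfd
    have hre : r0 ≫ f = r1 ≫ f := by
      match R with
      | WithTerminal.star => exact r0.elim
      | of Y =>
        apply hom_ext'
        rw [lam_comp, lam_comp]
        funext y
        rfl
    obtain ⟨k, -, -⟩ := huniv (of (PUnit : Type v)) f hre
    exact k.elim
  | WithTerminal.star, of Y => exact e.elim
  | of X, of Y =>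
    set y : Y := Lam.map g PUnit.unit with hy
    set h1 : of Y ⟶ of (ULift.{v} Prop) :=
      toOf _ (fun y' => ULift.up (∃ x, Lam.map e x = y')) with hh1
    set h2 : of Y ⟶ of (ULift.{v} Prop) :=
      toOf _ (fun _ => ULift.up True) with hh2
    have hc : r0 ≫ (e ≫ h1) = r1 ≫ (e ≫ h1) := by
      rw [← Category.assoc, heq, Category.assoc]
    obtain ⟨k, hk, hu⟩ := huniv (of (ULift.{v} Prop)) (e ≫ h1) hc
    have he2 : e ≫ h2 = e ≫ h1 := by
      apply hom_ext'
      rw [lam_comp, lam_comp]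
      funext x
      show ULift.up True = ULift.up (∃ x', Lam.map e x' = Lam.map e x)
      exact congrArg ULift.up (eq_true ⟨x, rfl⟩).symm
    have h12 : h1 = h2 := (hu h1 rfl).trans (hu h2 he2).symm
    have hex : ∃ x, Lam.map e x = y := by
      have := ConcreteCategory.congr_hom (congrArg Lam.map h12) y
      rw [show ⇑(ConcreteCategory.hom (Lam.map h1)) = _ from lam_toOf _ _,
        show ⇑(ConcreteCategory.hom (Lam.map h2)) = _ from lam_toOf _ _] at this
      exact of_eq_true (congrArg ULift.down this)
    obtain ⟨x, hx⟩ := hex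
    refine ⟨toOf (of X) (fun _ => x), ?_⟩
    apply hom_ext'
    rw [lam_comp, show ⇑(ConcreteCategory.hom (Lam.map (toOf (of X) (fun _ => x)))) = _ from lam_toOf _ _]
    funext u
    cases u
    exact hx

/-! ### `1` is a generator -/

lemma part7 : GeneratorP (WithTerminal.of (PUnit : Type v)) := by
  intro X C ι hC d hd
  constructor
  intro Z u w h
  match X, Z with
  | WithTerminal.star, WithTerminal.star => exact Subsingleton.elim u w
  | WithTerminal.star, of Z' => exact u.elim
  | of W, WithTerminal.star => exact Subsingleton.elim u w
  | of W, of Z' =>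
    apply hom_ext'
    funext w'
    set hw : of (PUnit : Type v) ⟶ of W := toOf _ (fun _ => w') with hhw
    have h1 : hw ≫ u = hw ≫ w := by
      rw [← hd hw, Category.assoc, Category.assoc, h]
    have := ConcreteCategory.congr_hom (congrArg Lam.map h1) PUnit.unit
    rw [lam_comp, lam_comp] at this
    exact this

end Aux2


section Aux3
open WithTerminal

lemma exists_unique_transfer {C D : Type*} [Category C] [Category D] (e : C ≌ D)
    {G A B : C} (m : A ⟶ B) (hfac : ∀ h : G ⟶ B, ∃! g : G ⟶ A, g ≫ m = h)
    (h' : e.functor.obj G ⟶ e.functor.obj B) :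
    ∃! g' : e.functor.obj G ⟶ e.functor.obj A, g' ≫ e.functor.map m = h' := by
  obtain ⟨g, hg, hgu⟩ := hfac (e.functor.preimage h')
  refine ⟨e.functor.map g, ?_, ?_⟩
  · show e.functor.map g ≫ e.functor.map m = h'
    rw [← Functor.map_comp, hg, Functor.map_preimage]
  intro g'' hgg
  have : e.functor.preimage g'' ≫ m = e.functor.preimage h' :=
    e.functor.map_injective
      (by rw [Functor.map_comp, Functor.map_preimage, Functor.map_preimage, hgg])
  rw [← Functor.map_preimage e.functor g'', hgu _ this]

lemma exists_unique_iso_transfer {C : Type*} [Category C] {G G' A B : C}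
    (ψ : G' ≅ G) (m : A ⟶ B) (hfac : ∀ h : G ⟶ B, ∃! g : G ⟶ A, g ≫ m = h)
    (h' : G' ⟶ B) : ∃! g' : G' ⟶ A, g' ≫ m = h' := by
  obtain ⟨g, hg, hgu⟩ := hfac (ψ.inv ≫ h')
  refine ⟨ψ.hom ≫ g, ?_, ?_⟩
  · show (ψ.hom ≫ g) ≫ m = h'
    rw [Category.assoc, hg, Iso.hom_inv_id_assoc]
  intro g'' h''
  have : ψ.inv ≫ g'' = g := hgu _ (show (ψ.inv ≫ g'') ≫ m = ψ.inv ≫ h' by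
    rw [Category.assoc, h''])
  rw [← this, Iso.hom_inv_id_assoc]

lemma part3 :
    ¬ ∃ T : Monad (Type v),
        (∀ (J : Type v) [SmallCategory J] [IsFiltered J],
          Limits.PreservesColimitsOfShape J T.toFunctor) ∧
        Nonempty (WithTerminal (Type v) ≌ T.Algebra) := by
  rintro ⟨T, -, ⟨e⟩⟩
  set F1 : T.Algebra := T.free.obj (PUnit : Type v) with hF1
  obtain ⟨A, B, m, hm, hfac⟩ := part2 (e.inverse.obj F1)
  have hfac2 := exists_unique_transfer e m hfac
  have hfac' : ∀ h' : F1 ⟶ e.functor.obj B,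
      ∃! g' : F1 ⟶ e.functor.obj A, g' ≫ e.functor.map m = h' :=
    fun h' => exists_unique_iso_transfer (e.counitIso.app F1).symm (e.functor.map m)
      hfac2 h'
  set m' := e.functor.map m with hm'
  set adj := T.adj with hadj
  -- `pt x` is the algebra morphism `F1 ⟶ X` corresponding to the element `x`.
  set pt : ∀ (X : T.Algebra), X.A → (F1 ⟶ X) :=
    fun X x => (adj.homEquiv (PUnit : Type v) X).symm (TypeCat.ofHom fun _ => x) with hpt
  set ev : ∀ (X : T.Algebra), (F1 ⟶ X) → X.A :=
    fun X f => (adj.homEquiv (PUnit : Type v) X f) PUnit.unit with hev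
  have hevpt : ∀ (X : T.Algebra) (x : X.A), ev X (pt X x) = x := by
    intro X x
    simp only [hev, hpt, Equiv.apply_symm_apply]
    rfl
  have hnat : ∀ {X Y : T.Algebra} (f : F1 ⟶ X) (u : X ⟶ Y),
      ev Y (f ≫ u) = u.f (ev X f) := by
    intro X Y f u
    simp only [hev]
    rw [adj.homEquiv_naturality_right]
    rfl
  have hptnat : ∀ {X Y : T.Algebra} (x : X.A) (u : X ⟶ Y),
      pt X x ≫ u = pt Y (u.f x) := by
    intro X Y x u
    simp only [hpt]
    rw [← Adjunction.homEquiv_naturality_right_symm]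
    rfl
  have hbij : Function.Bijective ((Monad.forget T).map m') := by
    constructor
    · intro a₁ a₂ hEq
      have h12 : pt _ a₁ ≫ m' = pt _ a₂ ≫ m' := by
        erw [hptnat, hptnat]
        exact congrArg _ hEq
      obtain ⟨g', -, hg'u⟩ := hfac' (pt _ a₁ ≫ m')
      have e1 := hg'u _ rfl
      have e2 := hg'u _ h12.symm
      have : pt _ a₁ = pt _ a₂ := e1.trans e2.symm
      have := congrArg (ev _) this
      erw [hevpt, hevpt] at this
      exact this
    · intro b
      obtain ⟨g', hg', -⟩ := hfac' (pt _ b)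
      refine ⟨ev _ g', ?_⟩
      have : ev _ (g' ≫ m') = ev _ (pt _ b) := congrArg (ev _) hg'
      erw [hnat, hevpt] at this
      exact this
  have hiso' : IsIso ((Monad.forget T).map m') := (isIso_iff_bijective _).mpr hbij
  have hiso2 : IsIso m' := isIso_of_reflects_iso m' (Monad.forget T)
  exact hm (isIso_of_fully_faithful e.functor m)

end Aux3

/-- `Set⋆ = WithTerminal Set` has finite limits, no object of it is a
strong generator, and it is not equivalent to any variety, although it has effective
congruences and `1` is an abstractly finite, regularly projective generator. -/
theorem stmt10 :
    Limits.HasFiniteLimits (WithTerminal (Type v)) ∧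
    (∀ G : WithTerminal (Type v), ∃ (A B : WithTerminal (Type v)) (m : A ⟶ B),
      ¬ IsIso m ∧ ∀ h : G ⟶ B, ∃! g : G ⟶ A, g ≫ m = h) ∧
    (¬ ∃ T : Monad (Type v),
        (∀ (J : Type v) [SmallCategory J] [IsFiltered J],
          Limits.PreservesColimitsOfShape J T.toFunctor) ∧
        Nonempty (WithTerminal (Type v) ≌ T.Algebra)) ∧
    EffectiveCongruences (WithTerminal (Type v)) ∧
    AbstractlyFinite (WithTerminal.of (PUnit : Type v)) ∧
    RegularProjective (WithTerminal.of (PUnit : Type v)) ∧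
    GeneratorP (WithTerminal.of (PUnit : Type v)) :=
  ⟨inferInstance, part2, part3, part4, part5, part6, part7⟩

end Paper
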